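/- Let P₁ and P₂ be cameras with distinct centers and let F be a real 3×3 matrix of rank 2. Then there exists a nonzero real scalar λ with F = λ ψ(P₁,P₂) if and only if the 4×4 matrix P₁ᵀ F P₂ is skew-symmetric. -/

import Mathlib

open Matrix

/-- The 6×6 matrix whose first three rows form the block `[P₁ | x | 0]` and whose last
three rows form the block `[P₂ | 0 | y]`. -/
noncomputable def bigMat (P₁ P₂ : Matrix (Fin 3) (Fin 4) ℝ) (x y : Fin 3 → ℝ) :
    Matrix (Fin 6) (Fin 6) ℝ :=
  fun i j =>
    if hi : (i : ℕ) < 3 then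
      if hj : (j : ℕ) < 4 then P₁ ⟨(i : ℕ), hi⟩ ⟨(j : ℕ), hj⟩
      else if (j : ℕ) = 4 then x ⟨(i : ℕ), hi⟩ else 0
    else
      if hj : (j : ℕ) < 4 then P₂ ⟨(i : ℕ) - 3, by have := i.isLt; omega⟩ ⟨(j : ℕ), hj⟩
      else if (j : ℕ) = 4 then 0
      else y ⟨(i : ℕ) - 3, by have := i.isLt; omega⟩

/-- `psi P₁ P₂` is the unique 3×3 matrix `F` such that for all `x y : ℝ³`,
`xᵀ F y = det [P₁ | x | 0; P₂ | 0 | y]`.  (Since the determinant is bilinear in `(x, y)`,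
this matrix is obtained by evaluating at pairs of standard basis vectors.) -/
noncomputable def psi (P₁ P₂ : Matrix (Fin 3) (Fin 4) ℝ) : Matrix (Fin 3) (Fin 3) ℝ :=
  fun a b => (bigMat P₁ P₂ (Pi.single a 1) (Pi.single b 1)).det

/-- A camera is a real 3×4 matrix of rank 3. -/
def IsCamera (P : Matrix (Fin 3) (Fin 4) ℝ) : Prop := P.rank = 3

namespace FundAux

def pad₁ (x : Fin 3 → ℝ) : Fin 6 → ℝ :=
  fun i => if h : (i : ℕ) < 3 then x ⟨(i : ℕ), h⟩ else 0

def pad₂ (y : Fin 3 → ℝ) : Fin 6 → ℝ :=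
  fun i => if (i : ℕ) < 3 then 0 else y ⟨(i : ℕ) - 3, by have := i.isLt; omega⟩

def sCol (P₁ P₂ : Matrix (Fin 3) (Fin 4) ℝ) (k : Fin 4) : Fin 6 → ℝ :=
  fun i => if h : (i : ℕ) < 3 then P₁ ⟨(i : ℕ), h⟩ k
    else P₂ ⟨(i : ℕ) - 3, by have := i.isLt; omega⟩ k

lemma uc_comm {A : Matrix (Fin 6) (Fin 6) ℝ} {j j' : Fin 6} (h : j ≠ j') (u v : Fin 6 → ℝ) :
    updateCol (updateCol A j u) j' v = updateCol (updateCol A j' v) j u := by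
  ext i l
  simp only [updateCol_apply]
  split_ifs with h1 h2 <;> simp_all

lemma uc_collapse {A : Matrix (Fin 6) (Fin 6) ℝ} {j : Fin 6} (u v : Fin 6 → ℝ) :
    updateCol (updateCol A j u) j v = updateCol A j v := by
  ext i l
  simp only [updateCol_apply]
  split_ifs <;> rfl

lemma bigMat_eq (P₁ P₂ : Matrix (Fin 3) (Fin 4) ℝ) (x y : Fin 3 → ℝ) :
    bigMat P₁ P₂ x y =
      updateCol (updateCol (bigMat P₁ P₂ 0 0) 4 (pad₁ x)) 5 (pad₂ y) := by
  ext i j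
  fin_cases j <;>
    simp [bigMat, updateCol_apply, pad₁, pad₂] <;>
    split_ifs <;> first | rfl | (exact absurd (by decide) ‹_›) | (exact absurd ‹_› (by decide))

lemma bigMat_apply_lt (P₁ P₂ : Matrix (Fin 3) (Fin 4) ℝ) (x y : Fin 3 → ℝ)
    (r : Fin 6) (k : Fin 4) :
    bigMat P₁ P₂ x y r ⟨(k : ℕ), by have := k.isLt; omega⟩ = sCol P₁ P₂ k r := by
  simp [bigMat, sCol, k.isLt]

end FundAux

namespace FundAux

variable (P₁ P₂ : Matrix (Fin 3) (Fin 4) ℝ)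

lemma pad₁_add (x x' : Fin 3 → ℝ) : pad₁ (x + x') = pad₁ x + pad₁ x' := by
  funext i; by_cases h : (i:ℕ) < 3 <;> simp [pad₁, h]

lemma pad₁_smul (c : ℝ) (x : Fin 3 → ℝ) : pad₁ (c • x) = c • pad₁ x := by
  funext i; by_cases h : (i:ℕ) < 3 <;> simp [pad₁, h]

lemma pad₂_add (x x' : Fin 3 → ℝ) : pad₂ (x + x') = pad₂ x + pad₂ x' := by
  funext i; by_cases h : (i:ℕ) < 3 <;> simp [pad₂, h]

lemma pad₂_smul (c : ℝ) (x : Fin 3 → ℝ) : pad₂ (c • x) = c • pad₂ x := by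
  funext i; by_cases h : (i:ℕ) < 3 <;> simp [pad₂, h]

/-- D is the determinant function -/
noncomputable def D (x y : Fin 3 → ℝ) : ℝ := (bigMat P₁ P₂ x y).det

lemma bigMat_left (x x' y : Fin 3 → ℝ) :
    bigMat P₁ P₂ x y = updateCol (bigMat P₁ P₂ x' y) 4 (pad₁ x) := by
  rw [bigMat_eq P₁ P₂ x y, bigMat_eq P₁ P₂ x' y,
    uc_comm (by decide) (pad₁ x') (pad₂ y), uc_collapse, uc_comm (by decide)]

lemma bigMat_right (x y y' : Fin 3 → ℝ) :
    bigMat P₁ P₂ x y = updateCol (bigMat P₁ P₂ x y') 5 (pad₂ y) := by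
  rw [bigMat_eq P₁ P₂ x y, bigMat_eq P₁ P₂ x y', uc_collapse]

lemma D_add_left (x x' y : Fin 3 → ℝ) : D P₁ P₂ (x + x') y = D P₁ P₂ x y + D P₁ P₂ x' y := by
  unfold D
  rw [bigMat_left P₁ P₂ (x+x') x y, pad₁_add, det_updateCol_add,
    ← bigMat_left P₁ P₂ x x y, ← bigMat_left P₁ P₂ x' x y]

lemma D_smul_left (c : ℝ) (x y : Fin 3 → ℝ) : D P₁ P₂ (c • x) y = c * D P₁ P₂ x y := by
  unfold D
  rw [bigMat_left P₁ P₂ (c • x) x y, pad₁_smul, det_updateCol_smul,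
    ← bigMat_left P₁ P₂ x x y]

lemma D_add_right (x y y' : Fin 3 → ℝ) : D P₁ P₂ x (y + y') = D P₁ P₂ x y + D P₁ P₂ x y' := by
  unfold D
  rw [bigMat_right P₁ P₂ x (y+y') y, pad₂_add, det_updateCol_add,
    ← bigMat_right P₁ P₂ x y y, ← bigMat_right P₁ P₂ x y' y]

lemma D_smul_right (c : ℝ) (x y : Fin 3 → ℝ) : D P₁ P₂ x (c • y) = c * D P₁ P₂ x y := by
  unfold D
  rw [bigMat_right P₁ P₂ x (c • y) y, pad₂_smul, det_updateCol_smul,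
    ← bigMat_right P₁ P₂ x y y]

noncomputable def Dlin : (Fin 3 → ℝ) →ₗ[ℝ] (Fin 3 → ℝ) →ₗ[ℝ] ℝ :=
  LinearMap.mk₂ ℝ (D P₁ P₂) (D_add_left P₁ P₂) (D_smul_left P₁ P₂)
    (D_add_right P₁ P₂) (D_smul_right P₁ P₂)

lemma D_eq (x y : Fin 3 → ℝ) : D P₁ P₂ x y = x ⬝ᵥ (psi P₁ P₂) *ᵥ y := by
  have hs : ∀ (d : Fin 3), (fun j => if d = j then (1:ℝ) else 0) = Pi.single d 1 :=
    fun d => funext fun j => by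
      rcases eq_or_ne d j with rfl|h
      · simp
      · simp [Pi.single_apply, h, Ne.symm h]
  have h1 : D P₁ P₂ x y = Dlin P₁ P₂ x y := rfl
  rw [h1, LinearMap.pi_apply_eq_sum_univ (Dlin P₁ P₂) x, LinearMap.sum_apply]
  simp only [hs, LinearMap.smul_apply, smul_eq_mul]
  have h2 : ∀ a : Fin 3, Dlin P₁ P₂ (Pi.single a 1) y = ∑ b : Fin 3, psi P₁ P₂ a b * y b := by
    intro a
    rw [LinearMap.pi_apply_eq_sum_univ (Dlin P₁ P₂ (Pi.single a 1)) y]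
    simp only [hs, smul_eq_mul]
    refine Finset.sum_congr rfl fun b _ => ?_
    have h3 : Dlin P₁ P₂ (Pi.single a 1) (Pi.single b 1) = psi P₁ P₂ a b := rfl
    rw [h3, mul_comm]
  simp only [h2, dotProduct, mulVec, Finset.mul_sum]


lemma det_uc_sub (M : Matrix (Fin 6) (Fin 6) ℝ) (j : Fin 6) (u v : Fin 6 → ℝ) :
    det (updateCol M j (u - v)) = det (updateCol M j u) - det (updateCol M j v) := by
  have h : u - v = u + (-1 : ℝ) • v := by funext i; simp; ring
  rw [h, det_updateCol_add, det_updateCol_smul]; ring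

lemma fin6_ne (k : Fin 4) (m : Fin 6) (hm : (m:ℕ) ≥ 4) :
    (⟨(k:ℕ), by have := k.isLt; omega⟩ : Fin 6) ≠ m := by
  intro hcon
  have h := congrArg Fin.val hcon
  simp only at h
  have := k.isLt; omega

lemma hpad1 (k : Fin 4) :
    pad₁ (fun i => P₁ i k) = sCol P₁ P₂ k - pad₂ (fun i => P₂ i k) := by
  funext i; by_cases h : (i:ℕ) < 3 <;> simp [pad₁, pad₂, sCol, h]

lemma hpad2 (l : Fin 4) :
    pad₂ (fun i => P₂ i l) = sCol P₁ P₂ l - pad₁ (fun i => P₁ i l) := by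
  funext i; by_cases h : (i:ℕ) < 3 <;> simp [pad₁, pad₂, sCol, h]

lemma zero1 (w : Fin 6 → ℝ) (k : Fin 4) :
    det (updateCol (updateCol (bigMat P₁ P₂ 0 0) 5 w) 4 (sCol P₁ P₂ k)) = 0 := by
  have hk4 := fin6_ne k 4 (by decide)
  have hk5 := fin6_ne k 5 (by decide)
  apply det_zero_of_column_eq hk4
  intro r
  rw [updateCol_ne hk4, updateCol_ne hk5, bigMat_apply_lt, updateCol_self]

lemma zero2 (u : Fin 6 → ℝ) (l : Fin 4) :
    det (updateCol (updateCol (bigMat P₁ P₂ 0 0) 4 u) 5 (sCol P₁ P₂ l)) = 0 := by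
  have hk4 := fin6_ne l 4 (by decide)
  have hk5 := fin6_ne l 5 (by decide)
  apply det_zero_of_column_eq hk5
  intro r
  rw [updateCol_ne hk5, updateCol_ne hk4, bigMat_apply_lt, updateCol_self]

lemma swap45 (u w : Fin 6 → ℝ) :
    det (updateCol (updateCol (bigMat P₁ P₂ 0 0) 4 u) 5 w) =
      - det (updateCol (updateCol (bigMat P₁ P₂ 0 0) 4 w) 5 u) := by
  set N := bigMat P₁ P₂ 0 0
  set A := updateCol (updateCol N 4 w) 5 u with hA
  have hperm : A.submatrix id (Equiv.swap (4:Fin 6) 5) =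
      updateCol (updateCol N 4 u) 5 w := by
    ext r j
    rcases eq_or_ne j 4 with rfl|h4
    · simp [hA, updateCol_apply]
    · rcases eq_or_ne j 5 with rfl|h5
      · simp [hA, updateCol_apply]
      · simp [hA, updateCol_apply, Equiv.swap_apply_of_ne_of_ne h4 h5, h4, h5]
  rw [← hperm, det_permute', Equiv.Perm.sign_swap (by decide)]
  simp

lemma D_skew (k l : Fin 4) :
    D P₁ P₂ (fun i => P₁ i k) (fun i => P₂ i l) =
      - D P₁ P₂ (fun i => P₁ i l) (fun i => P₂ i k) := by
  unfold D
  rw [bigMat_eq P₁ P₂ (fun i => P₁ i k) (fun i => P₂ i l),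
    bigMat_eq P₁ P₂ (fun i => P₁ i l) (fun i => P₂ i k)]
  rw [hpad2 P₁ P₂ l, det_uc_sub, zero2]
  rw [uc_comm (show (4:Fin 6) ≠ 5 by decide), hpad1 P₁ P₂ k, det_uc_sub, zero1]
  rw [uc_comm (show (5:Fin 6) ≠ 4 by decide), swap45]
  ring

lemma PtFP_entry (F : Matrix (Fin 3) (Fin 3) ℝ) (k l : Fin 4) :
    (P₁ᵀ * F * P₂) k l = (fun i => P₁ i k) ⬝ᵥ F *ᵥ (fun i => P₂ i l) := by
  simp only [mul_apply, dotProduct, mulVec, transpose_apply, Finset.sum_mul, Finset.mul_sum]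
  rw [Finset.sum_comm]
  refine Finset.sum_congr rfl fun a _ => Finset.sum_congr rfl fun b _ => by ring

lemma psi_skew : (P₁ᵀ * psi P₁ P₂ * P₂)ᵀ = -(P₁ᵀ * psi P₁ P₂ * P₂) := by
  ext k l
  rw [transpose_apply, Matrix.neg_apply, PtFP_entry, PtFP_entry, ← D_eq, ← D_eq, D_skew]

section LinAlg

open Module Submodule

lemma skew_flip (C : Matrix (Fin 4) (Fin 4) ℝ) (hC : Cᵀ = -C) (u v : Fin 4 → ℝ) :
    u ⬝ᵥ C *ᵥ v = -(v ⬝ᵥ C *ᵥ u) := by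
  rw [Matrix.dotProduct_mulVec, ← Matrix.mulVec_transpose, hC, Matrix.neg_mulVec,
    neg_dotProduct, dotProduct_comm]

lemma leftkill (C : Matrix (Fin 4) (Fin 4) ℝ) (hC : Cᵀ = -C) (c v : Fin 4 → ℝ)
    (h : C *ᵥ c = 0) : c ⬝ᵥ C *ᵥ v = 0 := by
  rw [skew_flip C hC, h, dotProduct_zero, neg_zero]

lemma diagzero (C : Matrix (Fin 4) (Fin 4) ℝ) (hC : Cᵀ = -C) (u : Fin 4 → ℝ) :
    u ⬝ᵥ C *ᵥ u = 0 := by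
  have h := skew_flip C hC u u
  linarith

lemma keyzero {ι : Type*} [Fintype ι] (b : Basis ι ℝ (Fin 4 → ℝ)) (B : Matrix (Fin 4) (Fin 4) ℝ)
    (h : ∀ i j, b i ⬝ᵥ B *ᵥ b j = 0) : B = 0 := by
  set f : (Fin 4 → ℝ) →ₗ[ℝ] (Fin 4 → ℝ) →ₗ[ℝ] ℝ :=
    LinearMap.mk₂ ℝ (fun u v => u ⬝ᵥ B *ᵥ v)
      (fun u u' v => by simp [add_dotProduct])
      (fun c u v => by simp [smul_dotProduct])
      (fun u v v' => by simp [Matrix.mulVec_add, dotProduct_add])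
      (fun c u v => by simp [Matrix.mulVec_smul, dotProduct_smul]) with hfdef
  have hf : f = 0 := b.ext fun i => b.ext fun j => by
    simpa [hfdef] using h i j
  ext m n
  have h2 : (Pi.single m 1 : Fin 4 → ℝ) ⬝ᵥ B *ᵥ (Pi.single n 1) = 0 := by
    have h3 : f (Pi.single m 1) (Pi.single n 1) = 0 := by rw [hf]; rfl
    simpa [hfdef] using h3
  simpa [dotProduct, Matrix.mulVec, Pi.single_apply, Finset.mul_sum,
    Finset.sum_ite_eq, Finset.sum_ite_eq'] using h2

lemma four_card {ι : Type*} [Fintype ι] [DecidableEq ι] (hcard : Fintype.card ι = 4)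
    (I₁ I₂ p q i j : ι) (hI : I₁ ≠ I₂)
    (hp1 : p ≠ I₁) (hp2 : p ≠ I₂) (hq1 : q ≠ I₁) (hq2 : q ≠ I₂)
    (hi1 : i ≠ I₁) (hi2 : i ≠ I₂) (hj1 : j ≠ I₁) (hj2 : j ≠ I₂)
    (hpq : p ≠ q) (hij : i ≠ j) :
    (i = p ∧ j = q) ∨ (i = q ∧ j = p) := by
  have huniv : ({I₁, I₂, p, q} : Finset ι) = Finset.univ := by
    apply Finset.eq_univ_of_card
    rw [hcard]
    rw [Finset.card_insert_of_notMem (by simp [hI, hp1.symm, hq1.symm]),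
      Finset.card_insert_of_notMem (by simp [hp2.symm, hq2.symm]),
      Finset.card_insert_of_notMem (by simp [hpq]), Finset.card_singleton]
  have hi : i ∈ ({I₁, I₂, p, q} : Finset ι) := huniv ▸ Finset.mem_univ i
  have hj : j ∈ ({I₁, I₂, p, q} : Finset ι) := huniv ▸ Finset.mem_univ j
  simp only [Finset.mem_insert, Finset.mem_singleton] at hi hj
  rcases hi with rfl|rfl|rfl|rfl <;> rcases hj with rfl|rfl|rfl|rfl <;> tauto

lemma prop_core {s : Set (Fin 4 → ℝ)} [Fintype s] (b : Basis s ℝ (Fin 4 → ℝ))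
    (hb : ∀ x : s, b x = (x : Fin 4 → ℝ))
    (hcard : Fintype.card s = 4)
    (c₁ c₂ : Fin 4 → ℝ) (h1s : c₁ ∈ s) (h2s : c₂ ∈ s) (hne : c₁ ≠ c₂)
    (B B' : Matrix (Fin 4) (Fin 4) ℝ) (hB : Bᵀ = -B) (hB' : B'ᵀ = -B')
    (hBc₁ : B *ᵥ c₁ = 0) (hBc₂ : B *ᵥ c₂ = 0)
    (hB'c₁ : B' *ᵥ c₁ = 0) (hB'c₂ : B' *ᵥ c₂ = 0)
    (hB'0 : B' ≠ 0) : ∃ μ : ℝ, B = μ • B' := by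
  classical
  set I₁ : s := ⟨c₁, h1s⟩
  set I₂ : s := ⟨c₂, h2s⟩
  have hI : I₁ ≠ I₂ := fun h => hne (congrArg Subtype.val h)
  have hv1 : b I₁ = c₁ := hb I₁
  have hv2 : b I₂ = c₂ := hb I₂
  obtain ⟨i, j, hij0⟩ : ∃ i j : s, b i ⬝ᵥ B' *ᵥ b j ≠ 0 := by
    by_contra hcon
    push_neg at hcon
    exact hB'0 (keyzero b B' hcon)
  have hi1 : i ≠ I₁ := by
    rintro rfl; exact hij0 (by rw [hv1]; exact leftkill B' hB' c₁ _ hB'c₁)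
  have hi2 : i ≠ I₂ := by
    rintro rfl; exact hij0 (by rw [hv2]; exact leftkill B' hB' c₂ _ hB'c₂)
  have hj1 : j ≠ I₁ := by
    rintro rfl; refine hij0 ?_
    rw [hv1, skew_flip B' hB', leftkill B' hB' c₁ _ hB'c₁, neg_zero]
  have hj2 : j ≠ I₂ := by
    rintro rfl; refine hij0 ?_
    rw [hv2, skew_flip B' hB', leftkill B' hB' c₂ _ hB'c₂, neg_zero]
  have hij : i ≠ j := by
    rintro rfl; exact hij0 (diagzero B' hB' _)
  set t' : ℝ := b i ⬝ᵥ B' *ᵥ b j with ht'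
  set μ : ℝ := (b i ⬝ᵥ B *ᵥ b j) / t' with hμ
  refine ⟨μ, ?_⟩
  have hC : B - μ • B' = 0 := by
    set C : Matrix (Fin 4) (Fin 4) ℝ := B - μ • B' with hCdef
    have hCskew : Cᵀ = -C := by
      rw [hCdef, Matrix.transpose_sub, Matrix.transpose_smul, hB, hB', smul_neg]
      ext a b; simp; ring
    have hCc₁ : C *ᵥ c₁ = 0 := by
      rw [hCdef, Matrix.sub_mulVec, hBc₁, Matrix.smul_mulVec, hB'c₁]; simp
    have hCc₂ : C *ᵥ c₂ = 0 := by
      rw [hCdef, Matrix.sub_mulVec, hBc₂, Matrix.smul_mulVec, hB'c₂]; simp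
    have hCval : ∀ u v : Fin 4 → ℝ, u ⬝ᵥ C *ᵥ v = u ⬝ᵥ B *ᵥ v - μ * (u ⬝ᵥ B' *ᵥ v) := by
      intro u v
      rw [hCdef, Matrix.sub_mulVec, dotProduct_sub, Matrix.smul_mulVec,
        dotProduct_smul, smul_eq_mul]
    apply keyzero b
    intro p q
    by_cases hp1 : p = I₁
    · subst hp1; rw [hv1]; exact leftkill C hCskew c₁ _ hCc₁
    by_cases hp2 : p = I₂
    · subst hp2; rw [hv2]; exact leftkill C hCskew c₂ _ hCc₂
    by_cases hq1 : q = I₁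
    · subst hq1; rw [hv1, hCc₁, dotProduct_zero]
    by_cases hq2 : q = I₂
    · subst hq2; rw [hv2, hCc₂, dotProduct_zero]
    by_cases hpq : p = q
    · subst hpq; exact diagzero C hCskew _
    rcases four_card hcard I₁ I₂ p q i j hI hp1 hp2 hq1 hq2 hi1 hi2 hj1 hj2 hpq hij with
      ⟨rfl, rfl⟩ | ⟨rfl, rfl⟩
    · rw [hCval, hμ, div_mul_cancel₀ _ hij0]
      ring
    · rw [skew_flip C hCskew, hCval, hμ, div_mul_cancel₀ _ hij0]
      ring
  have := sub_eq_zero.mp hC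
  exact this

end LinAlg

section Rank

open Module Submodule

lemma finrank_fun3 : finrank ℝ (Fin 3 → ℝ) = 3 := by simp
lemma finrank_fun4 : finrank ℝ (Fin 4 → ℝ) = 4 := by simp

lemma surj3 (P : Matrix (Fin 3) (Fin 4) ℝ) (h : P.rank = 3) :
    Function.Surjective P.mulVecLin := by
  rw [← LinearMap.range_eq_top]
  apply Submodule.eq_top_of_finrank_eq
  rw [finrank_fun3]
  exact h

lemma ker1 (P : Matrix (Fin 3) (Fin 4) ℝ) (h : P.rank = 3) :
    finrank ℝ (LinearMap.ker P.mulVecLin) = 1 := by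
  have h2 := LinearMap.finrank_range_add_finrank_ker P.mulVecLin
  rw [finrank_fun4] at h2
  have h3 : finrank ℝ (LinearMap.range P.mulVecLin) = 3 := h
  omega

lemma injT (P : Matrix (Fin 3) (Fin 4) ℝ) (h : P.rank = 3) :
    Function.Injective Pᵀ.mulVecLin := by
  rw [← LinearMap.ker_eq_bot]
  have h' : Pᵀ.rank = 3 := by rw [Matrix.rank_transpose, h]
  have h2 := LinearMap.finrank_range_add_finrank_ker Pᵀ.mulVecLin
  rw [finrank_fun3] at h2
  have h3 : finrank ℝ (LinearMap.range Pᵀ.mulVecLin) = 3 := h'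
  have h4 : finrank ℝ (LinearMap.ker Pᵀ.mulVecLin) = 0 := by omega
  exact Submodule.finrank_eq_zero.mp h4

lemma cancel (P₁ P₂ : Matrix (Fin 3) (Fin 4) ℝ) (hP₁ : P₁.rank = 3) (hP₂ : P₂.rank = 3)
    (G : Matrix (Fin 3) (Fin 3) ℝ) (h : P₁ᵀ * G * P₂ = 0) : G = 0 := by
  have hmv : ∀ w : Fin 3 → ℝ, G *ᵥ w = 0 := by
    intro w
    obtain ⟨v, hv⟩ := surj3 P₂ hP₂ w
    rw [Matrix.mulVecLin_apply] at hv
    have h0 : P₁ᵀ *ᵥ (G *ᵥ w) = 0 := by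
      have h1 := congrArg (fun M => M *ᵥ v) h
      simpa [← Matrix.mulVec_mulVec, hv] using h1
    have h2 : P₁ᵀ.mulVecLin (G *ᵥ w) = P₁ᵀ.mulVecLin 0 := by
      rw [Matrix.mulVecLin_apply, Matrix.mulVecLin_apply, Matrix.mulVec_zero, h0]
    exact injT P₁ hP₁ h2
  ext a c
  have h3 := congrFun (hmv (Pi.single c 1)) a
  simpa [Matrix.mulVec_single] using h3

end Rank

lemma row_top (P₁ P₂ : Matrix (Fin 3) (Fin 4) ℝ) (x y : Fin 3 → ℝ) (v : Fin 6 → ℝ)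
    (r : Fin 3) :
    (bigMat P₁ P₂ x y *ᵥ v) ⟨(r:ℕ), by have := r.isLt; omega⟩ =
      (P₁ *ᵥ fun j : Fin 4 => v ⟨(j:ℕ), by have := j.isLt; omega⟩) r + v 4 * x r := by
  have hr : ((r:ℕ)) < 3 := r.isLt
  simp [Matrix.mulVec, dotProduct, Fin.sum_univ_six, Fin.sum_univ_four, bigMat, hr,
    (show ((3:Fin 6):ℕ) = 3 from rfl), (show ((4:Fin 6):ℕ) = 4 from rfl),
    (show ((5:Fin 6):ℕ) = 5 from rfl), (show ((3:Fin 4):ℕ) = 3 from rfl),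
    (show ((2:Fin 4):ℕ) = 2 from rfl), (show ((1:Fin 4):ℕ) = 1 from rfl),
    (show ((0:Fin 4):ℕ) = 0 from rfl), Fin.mk_zero, Fin.mk_one]
  try ring
  try rfl

lemma row_bot (P₁ P₂ : Matrix (Fin 3) (Fin 4) ℝ) (x y : Fin 3 → ℝ) (v : Fin 6 → ℝ)
    (r : Fin 3) :
    (bigMat P₁ P₂ x y *ᵥ v) ⟨(r:ℕ) + 3, by have := r.isLt; omega⟩ =
      (P₂ *ᵥ fun j : Fin 4 => v ⟨(j:ℕ), by have := j.isLt; omega⟩) r + v 5 * y r := by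
  have hr : ¬ ((r:ℕ) + 3 < 3) := by omega
  simp [Matrix.mulVec, dotProduct, Fin.sum_univ_six, Fin.sum_univ_four, bigMat, hr,
    (show ((3:Fin 6):ℕ) = 3 from rfl), (show ((4:Fin 6):ℕ) = 4 from rfl),
    (show ((5:Fin 6):ℕ) = 5 from rfl), (show ((3:Fin 4):ℕ) = 3 from rfl),
    (show ((2:Fin 4):ℕ) = 2 from rfl), (show ((1:Fin 4):ℕ) = 1 from rfl),
    (show ((0:Fin 4):ℕ) = 0 from rfl), Fin.mk_zero, Fin.mk_one]
  try ring
  try rfl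

end FundAux

set_option maxHeartbeats 2000000 in
theorem stmt1 (P₁ P₂ : Matrix (Fin 3) (Fin 4) ℝ) (F : Matrix (Fin 3) (Fin 3) ℝ)
    (h₁ : IsCamera P₁) (h₂ : IsCamera P₂)
    (hcenters : LinearMap.ker P₁.mulVecLin ≠ LinearMap.ker P₂.mulVecLin)
    (hF : F.rank = 2) :
    (∃ lam : ℝ, lam ≠ 0 ∧ F = lam • psi P₁ P₂) ↔
      (P₁ᵀ * F * P₂)ᵀ = -(P₁ᵀ * F * P₂) := by
  classical
  have hP₁ : P₁.rank = 3 := h₁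
  have hP₂ : P₂.rank = 3 := h₂
  constructor
  · rintro ⟨lam, hlam, rfl⟩
    rw [Matrix.mul_smul, Matrix.smul_mul, Matrix.transpose_smul, FundAux.psi_skew P₁ P₂,
      smul_neg]
  · intro hskew
    -- centers
    have hkni1 : LinearMap.ker P₁.mulVecLin ≠ ⊥ := by
      intro hbot; have h := FundAux.ker1 P₁ hP₁; rw [hbot] at h; simp at h
    have hkni2 : LinearMap.ker P₂.mulVecLin ≠ ⊥ := by
      intro hbot; have h := FundAux.ker1 P₂ hP₂; rw [hbot] at h; simp at h
    obtain ⟨c₁, hc₁mem, hc₁0⟩ := Submodule.exists_mem_ne_zero_of_ne_bot hkni1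
    obtain ⟨c₂, hc₂mem, hc₂0⟩ := Submodule.exists_mem_ne_zero_of_ne_bot hkni2
    have hspan1 : (ℝ ∙ c₁) = LinearMap.ker P₁.mulVecLin :=
      Submodule.eq_of_le_of_finrank_eq ((Submodule.span_singleton_le_iff_mem _ _).mpr hc₁mem)
        (by rw [finrank_span_singleton hc₁0, FundAux.ker1 P₁ hP₁])
    have hspan2 : (ℝ ∙ c₂) = LinearMap.ker P₂.mulVecLin :=
      Submodule.eq_of_le_of_finrank_eq ((Submodule.span_singleton_le_iff_mem _ _).mpr hc₂mem)
        (by rw [finrank_span_singleton hc₂0, FundAux.ker1 P₂ hP₂])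
    have hc₂n1 : c₂ ∉ LinearMap.ker P₁.mulVecLin := by
      intro hmem
      apply hcenters
      have heq : (ℝ ∙ c₂) = LinearMap.ker P₁.mulVecLin :=
        Submodule.eq_of_le_of_finrank_eq ((Submodule.span_singleton_le_iff_mem _ _).mpr hmem)
          (by rw [finrank_span_singleton hc₂0, FundAux.ker1 P₁ hP₁])
      rw [← heq, hspan2]
    have hc₁n2 : c₁ ∉ LinearMap.ker P₂.mulVecLin := by
      intro hmem
      apply hcenters
      have heq : (ℝ ∙ c₁) = LinearMap.ker P₂.mulVecLin :=
        Submodule.eq_of_le_of_finrank_eq ((Submodule.span_singleton_le_iff_mem _ _).mpr hmem)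
          (by rw [finrank_span_singleton hc₁0, FundAux.ker1 P₂ hP₂])
      rw [← hspan1, heq]
    have hP₁c₁ : P₁ *ᵥ c₁ = 0 := by
      have := LinearMap.mem_ker.mp hc₁mem; rwa [Matrix.mulVecLin_apply] at this
    have hP₂c₂ : P₂ *ᵥ c₂ = 0 := by
      have := LinearMap.mem_ker.mp hc₂mem; rwa [Matrix.mulVecLin_apply] at this
    have hP₁c₂ : P₁ *ᵥ c₂ ≠ 0 := by
      intro h0; exact hc₂n1 (LinearMap.mem_ker.mpr (by rwa [Matrix.mulVecLin_apply]))
    have hP₂c₁ : P₂ *ᵥ c₁ ≠ 0 := by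
      intro h0; exact hc₁n2 (LinearMap.mem_ker.mpr (by rwa [Matrix.mulVecLin_apply]))
    have hne : c₁ ≠ c₂ := fun h => hc₁n2 (h ▸ hc₂mem)
    have hli2 : LinearIndependent ℝ ![c₁, c₂] := by
      rw [LinearIndependent.pair_iff]
      intro a t hst
      have h1 : P₁ *ᵥ (a • c₁ + t • c₂) = 0 := by rw [hst, Matrix.mulVec_zero]
      rw [Matrix.mulVec_add, Matrix.mulVec_smul, Matrix.mulVec_smul, hP₁c₁, smul_zero,
        zero_add] at h1
      have ht : t = 0 := by
        rcases smul_eq_zero.mp h1 with h | h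
        · exact h
        · exact absurd h hP₁c₂
      subst ht
      refine ⟨?_, rfl⟩
      rw [zero_smul, add_zero] at hst
      rcases smul_eq_zero.mp hst with h | h
      · exact h
      · exact absurd h hc₁0
    have hset : LinearIndepOn ℝ id ({c₁, c₂} : Set (Fin 4 → ℝ)) := by
      have h1 := hli2.linearIndepOn_id
      have h2 : Set.range ![c₁, c₂] = {c₁, c₂} := by
        ext z
        simp [Fin.exists_fin_two]
        tauto
      rwa [h2] at h1
    set s : Set (Fin 4 → ℝ) := hset.extend (Set.subset_univ _) with hsdef
    set b : Module.Basis s ℝ (Fin 4 → ℝ) := Module.Basis.extend hset with hbdef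
    have hb : ∀ x : s, b x = (x : Fin 4 → ℝ) := fun x => Module.Basis.extend_apply_self hset x
    have hsub : ({c₁, c₂} : Set (Fin 4 → ℝ)) ⊆ s := hset.subset_extend _
    haveI : Fintype s := FiniteDimensional.fintypeBasisIndex b
    have hcard : Fintype.card s = 4 := by
      have h := Module.finrank_eq_card_basis b
      rw [FundAux.finrank_fun4] at h
      omega
    have h1s : c₁ ∈ s := hsub (by simp)
    have h2s : c₂ ∈ s := hsub (by simp)
    set I₁ : s := ⟨c₁, h1s⟩ with hI₁def
    set I₂ : s := ⟨c₂, h2s⟩ with hI₂def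
    have hI : I₁ ≠ I₂ := fun h => hne (congrArg Subtype.val h)
    have hcompl : (Finset.univ \ {I₁, I₂} : Finset s).card = 2 := by
      rw [Finset.card_sdiff_of_subset (Finset.subset_univ _), Finset.card_univ, hcard,
        Finset.card_insert_of_notMem (by simp [hI]), Finset.card_singleton]
    obtain ⟨p, q, hpq, hpair⟩ := Finset.card_eq_two.mp hcompl
    have hpmem : p ∈ (Finset.univ \ {I₁, I₂} : Finset s) := by rw [hpair]; simp
    have hqmem : q ∈ (Finset.univ \ {I₁, I₂} : Finset s) := by rw [hpair]; simp
    rw [Finset.mem_sdiff, Finset.mem_insert, Finset.mem_singleton] at hpmem hqmem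
    push_neg at hpmem hqmem
    obtain ⟨-, hp1, hp2⟩ := hpmem
    obtain ⟨-, hq1, hq2⟩ := hqmem
    set w₃ : Fin 4 → ℝ := (p : Fin 4 → ℝ) with hw₃
    set w₄ : Fin 4 → ℝ := (q : Fin 4 → ℝ) with hw₄
    have hinj : Function.Injective ![I₁, I₂, p, q] := by
      intro a c hac
      fin_cases a <;> fin_cases c <;> simp_all <;>
        first
          | rfl
          | exact absurd hac hI | exact absurd hac.symm hI
          | exact absurd hac.symm hp1 | exact absurd hac hp1
          | exact absurd hac.symm hp2 | exact absurd hac hp2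
          | exact absurd hac.symm hq1 | exact absurd hac hq1
          | exact absurd hac.symm hq2 | exact absurd hac hq2
          | exact absurd hac hpq | exact absurd hac.symm hpq
    have hli4 := b.linearIndependent.comp _ hinj
    have hcomb : ∀ g : Fin 4 → ℝ,
        g 0 • c₁ + g 1 • c₂ + g 2 • w₃ + g 3 • w₄ = 0 → ∀ t, g t = 0 := by
      intro g hg
      apply Fintype.linearIndependent_iff.mp hli4 g
      rw [Fin.sum_univ_four]
      have e0 : b (![I₁, I₂, p, q] 0) = c₁ := hb I₁
      have e1 : b (![I₁, I₂, p, q] 1) = c₂ := hb I₂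
      have e2 : b (![I₁, I₂, p, q] 2) = w₃ := hb p
      have e3 : b (![I₁, I₂, p, q] 3) = w₄ := hb q
      rw [Function.comp_apply, Function.comp_apply, Function.comp_apply, Function.comp_apply,
        e0, e1, e2, e3]
      exact hg
    have hψ0 : psi P₁ P₂ ≠ 0 := by
      intro hzero
      set x : Fin 3 → ℝ := P₁ *ᵥ w₃ with hx
      set y : Fin 3 → ℝ := P₂ *ᵥ w₄ with hy
      have hdet : (bigMat P₁ P₂ x y).det = 0 := by
        have hDD := FundAux.D_eq P₁ P₂ x y
        unfold FundAux.D at hDD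
        rw [hDD, hzero]
        simp
      obtain ⟨v, hv0, hveq⟩ := Matrix.exists_mulVec_eq_zero_iff.mpr hdet
      set u : Fin 4 → ℝ := fun j => v ⟨(j:ℕ), by have := j.isLt; omega⟩ with hu
      have htop : ∀ r : Fin 3, (P₁ *ᵥ u) r + v 4 * x r = 0 := by
        intro r
        rw [← FundAux.row_top P₁ P₂ x y v r, hveq]
        rfl
      have hbot : ∀ r : Fin 3, (P₂ *ᵥ u) r + v 5 * y r = 0 := by
        intro r
        rw [← FundAux.row_bot P₁ P₂ x y v r, hveq]
        rfl
      have hker1 : u + v 4 • w₃ ∈ LinearMap.ker P₁.mulVecLin := by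
        rw [LinearMap.mem_ker, Matrix.mulVecLin_apply, Matrix.mulVec_add, Matrix.mulVec_smul]
        funext r
        have := htop r
        simp only [Pi.add_apply, Pi.smul_apply, smul_eq_mul, Pi.zero_apply]
        rw [← hx]
        linarith
      have hker2 : u + v 5 • w₄ ∈ LinearMap.ker P₂.mulVecLin := by
        rw [LinearMap.mem_ker, Matrix.mulVecLin_apply, Matrix.mulVec_add, Matrix.mulVec_smul]
        funext r
        have := hbot r
        simp only [Pi.add_apply, Pi.smul_apply, smul_eq_mul, Pi.zero_apply]
        rw [← hy]
        linarith
      rw [← hspan1] at hker1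
      rw [← hspan2] at hker2
      obtain ⟨a, ha⟩ := Submodule.mem_span_singleton.mp hker1
      obtain ⟨a₂, ha₂⟩ := Submodule.mem_span_singleton.mp hker2
      have hcombeq : (-a) • c₁ + a₂ • c₂ + (v 4) • w₃ + (-(v 5)) • w₄ = 0 := by
        funext i
        have e1 := congrFun ha i
        have e2 := congrFun ha₂ i
        simp only [Pi.add_apply, Pi.smul_apply, smul_eq_mul, Pi.zero_apply, Pi.neg_apply,
          neg_mul] at e1 e2 ⊢
        linarith
      have hall := hcomb ![(-a), a₂, v 4, -(v 5)] (by simpa using hcombeq)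
      have ha0 : a = 0 := by have := hall 0; simpa using this
      have h40 : v 4 = 0 := hall 2
      have h50 : v 5 = 0 := by have := hall 3; simpa using this
      have hu0 : u = 0 := by
        rw [ha0, zero_smul] at ha
        rw [h40, zero_smul, add_zero] at ha
        exact ha.symm
      apply hv0
      funext z
      fin_cases z
      · exact congrFun hu0 0
      · exact congrFun hu0 1
      · exact congrFun hu0 2
      · exact congrFun hu0 3
      · exact h40
      · exact h50
    have hB'skew : (P₁ᵀ * psi P₁ P₂ * P₂)ᵀ = -(P₁ᵀ * psi P₁ P₂ * P₂) := FundAux.psi_skew P₁ P₂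
    have kills : ∀ (G : Matrix (Fin 3) (Fin 3) ℝ), ((P₁ᵀ * G * P₂)ᵀ = -(P₁ᵀ * G * P₂)) →
        (P₁ᵀ * G * P₂) *ᵥ c₁ = 0 ∧ (P₁ᵀ * G * P₂) *ᵥ c₂ = 0 := by
      intro G hG
      constructor
      · have ht : (P₁ᵀ * G * P₂)ᵀ *ᵥ c₁ = 0 := by
          rw [Matrix.transpose_mul, Matrix.transpose_mul, Matrix.transpose_transpose,
            ← Matrix.mulVec_mulVec, ← Matrix.mulVec_mulVec, hP₁c₁]
          simp
        rw [hG, Matrix.neg_mulVec] at ht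
        exact neg_eq_zero.mp ht
      · rw [← Matrix.mulVec_mulVec, hP₂c₂]
        simp
    have hB'0 : P₁ᵀ * psi P₁ P₂ * P₂ ≠ 0 := fun h0 =>
      hψ0 (FundAux.cancel P₁ P₂ hP₁ hP₂ _ h0)
    obtain ⟨μ, hμ⟩ := FundAux.prop_core b hb hcard c₁ c₂ h1s h2s hne
      (P₁ᵀ * F * P₂) (P₁ᵀ * psi P₁ P₂ * P₂) hskew hB'skew
      (kills F hskew).1 (kills F hskew).2 (kills _ hB'skew).1 (kills _ hB'skew).2 hB'0
    have hFeq : F = μ • psi P₁ P₂ := by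
      have hzero : P₁ᵀ * (F - μ • psi P₁ P₂) * P₂ = 0 := by
        rw [Matrix.mul_sub, Matrix.sub_mul, Matrix.mul_smul, Matrix.smul_mul, hμ]
        simp
      have := FundAux.cancel P₁ P₂ hP₁ hP₂ _ hzero
      have h2 := sub_eq_zero.mp this
      exact h2
    refine ⟨μ, ?_, hFeq⟩
    intro hμ0
    rw [hμ0, zero_smul] at hFeq
    rw [hFeq, Matrix.rank_zero] at hF
    exact (by norm_num : (0:ℕ) ≠ 2) hF
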